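/- If a ternary semigroup (G,[ ]) satisfies the identity [xyz] = [yxz] for all x,y,z and there exist elements a,b ∈ G with [axb] = x for all x ∈ G, then (G,[ ]) is commutative, i.e. [xyz] is invariant under all permutations of x,y,z. -/

import Mathlib

/-- If a ternary semigroup satisfies [xyz] = [yxz] and there are a,b with
[axb] = x for all x, then it is commutative (invariant under all permutations). -/
theorem stmt4 {G : Type*} (f : G → G → G → G)
    (assoc : ∀ x y z u v : G, f (f x y z) u v = f x (f y z u) v ∧
      f x (f y z u) v = f x y (f z u v))
    (hcomm12 : ∀ x y z : G, f x y z = f y x z)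
    (a b : G) (hab : ∀ x : G, f a x b = x) :
    ∀ (g : Fin 3 → G) (σ : Equiv.Perm (Fin 3)),
      f (g 0) (g 1) (g 2) = f (g (σ 0)) (g (σ 1)) (g (σ 2)) := by
  have hcyc : ∀ x y z : G, f x y z = f z x y := by
    intro x y z
    calc f x y z = f x y (f a z b) := by rw [hab]
      _ = f x (f y a z) b := ((assoc x y a z b).2).symm
      _ = f (f x y a) z b := ((assoc x y a z b).1).symm
      _ = f z (f x y a) b := hcomm12 _ _ _
      _ = f z x (f y a b) := (assoc z x y a b).2
      _ = f z x y := by rw [hcomm12 y a b, hab]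
  have hcomm23 : ∀ x y z : G, f x y z = f x z y := by
    intro x y z
    rw [hcyc x y z, hcomm12 z x y, hcyc x z y]
  have hall : ∀ x y z p q r : G,
      ((p = x ∧ q = y ∧ r = z) ∨ (p = x ∧ q = z ∧ r = y) ∨
       (p = y ∧ q = x ∧ r = z) ∨ (p = y ∧ q = z ∧ r = x) ∨
       (p = z ∧ q = x ∧ r = y) ∨ (p = z ∧ q = y ∧ r = x)) →
      f x y z = f p q r := by
    rintro x y z p q r (⟨rfl, rfl, rfl⟩|⟨rfl, rfl, rfl⟩|⟨rfl, rfl, rfl⟩|⟨rfl, rfl, rfl⟩|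
      ⟨rfl, rfl, rfl⟩|⟨rfl, rfl, rfl⟩)
    · rfl
    · exact hcomm23 _ _ _
    · exact hcomm12 _ _ _
    · exact (hcyc _ _ _).symm
    · exact hcyc _ _ _
    · rw [hcyc, hcomm23]
  intro g σ
  apply hall
  fin_cases σ <;> first | (left; exact ⟨rfl, rfl, rfl⟩) | (right; left; exact ⟨rfl, rfl, rfl⟩) | (right; right; left; exact ⟨rfl, rfl, rfl⟩) | (right; right; right; left; exact ⟨rfl, rfl, rfl⟩) | (right; right; right; right; left; exact ⟨rfl, rfl, rfl⟩) | (right; right; right; right; right; exact ⟨rfl, rfl, rfl⟩)
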